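/- arXiv:0906.1849 — 2 statements merged into one kernel-verified Lean document; each statement's English description precedes it below -/
import Mathlib

section
/- Let S ⊆ {0,1}ⁿ be nonempty with |S| = s, and for α ∈ S let l(α) be the number of α' ∈ S at Hamming distance exactly 1 from α. Then Σ_{α ∈ S} l(α) ≤ s · log₂ s. -/
open Real

-- F(x) = negMulLog x + negMulLog (1-x) - (2 log 2) x is concave on [0,1/2], 0 at endpoints.
lemma F_nonneg {x : ℝ} (h0 : 0 ≤ x) (h1 : x ≤ 1/2) :
    0 ≤ negMulLog x + negMulLog (1 - x) - (2 * Real.log 2) * x := by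
  set F : ℝ → ℝ := fun x => negMulLog x + negMulLog (1 - x) - (2 * Real.log 2) * x with hF
  have hconc : ConcaveOn ℝ (Set.Icc (0:ℝ) (1/2)) F := by
    refine ⟨convex_Icc _ _, ?_⟩
    intro p hp q hq a b ha hb hab
    have hp' : (0:ℝ) ≤ p := hp.1
    have hq' : (0:ℝ) ≤ q := hq.1
    have hp1 : (0:ℝ) ≤ 1 - p := by linarith [hp.2]
    have hq1 : (0:ℝ) ≤ 1 - q := by linarith [hq.2]
    have c1 := concaveOn_negMulLog.2 (Set.mem_Ici.2 hp') (Set.mem_Ici.2 hq') ha hb hab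
    have c2 := concaveOn_negMulLog.2 (Set.mem_Ici.2 hp1) (Set.mem_Ici.2 hq1) ha hb hab
    have key : 1 - (a * p + b * q) = a * (1 - p) + b * (1 - q) := by ring_nf; linarith
    simp only [smul_eq_mul] at c1 c2
    simp only [hF, smul_eq_mul, key]
    linarith [c1, c2]
  have h02 : (0:ℝ) ∈ Set.Icc (0:ℝ) (1/2) := by norm_num
  have hh : (1/2:ℝ) ∈ Set.Icc (0:ℝ) (1/2) := by norm_num
  have hx : x = (1 - 2*x) * 0 + (2*x) * (1/2) := by ring
  have := hconc.2 h02 hh (by linarith : (0:ℝ) ≤ 1 - 2*x) (by linarith : (0:ℝ) ≤ 2*x) (by ring)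
  simp only [smul_eq_mul, mul_zero, zero_add] at this
  have hx' : 2*x * (1/2:ℝ) = x := by ring
  rw [hx'] at this
  have hF0 : F 0 = 0 := by simp [hF]
  have hFh : F (1/2) = 0 := by
    have h2 : Real.log (1/2) = - Real.log 2 := by
      rw [one_div, Real.log_inv]
    show negMulLog (1/2) + negMulLog (1 - 1/2) - 2 * Real.log 2 * (1/2) = 0
    have h12 : (1:ℝ) - 1/2 = 1/2 := by norm_num
    rw [h12, negMulLog, h2]; ring
  calc (0:ℝ) = (1 - 2*x) * F 0 + 2*x * F (1/2) := by rw [hF0, hFh]; ring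
    _ ≤ F x := this

lemma key_log {a b : ℝ} (ha : 0 ≤ a) (hab : a ≤ b) :
    a * Real.log a + b * Real.log b + 2 * Real.log 2 * a ≤ (a + b) * Real.log (a + b) := by
  rcases eq_or_lt_of_le ha with h | h
  · simp [← h]
  · have hb : 0 < b := lt_of_lt_of_le h hab
    set s := a + b with hs
    have hspos : 0 < s := by positivity
    have hx0 : 0 ≤ a / s := by positivity
    have hx1 : a / s ≤ 1/2 := by
      rw [div_le_iff₀ hspos]; linarith
    have hF := F_nonneg hx0 hx1
    have h1 : (1 : ℝ) - a / s = b / s := by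
      field_simp
      rw [hs]; ring
    rw [h1] at hF
    have e1 : Real.negMulLog (a / s) = -(a/s) * (Real.log a - Real.log s) := by
      rw [Real.negMulLog, Real.log_div (ne_of_gt h) (ne_of_gt hspos)]
    have e2 : Real.negMulLog (b / s) = -(b/s) * (Real.log b - Real.log s) := by
      rw [Real.negMulLog, Real.log_div (ne_of_gt hb) (ne_of_gt hspos)]
    rw [e1, e2] at hF
    have hmul := mul_le_mul_of_nonneg_left hF (le_of_lt hspos)
    rw [mul_zero] at hmul
    have expand : s * (-(a/s) * (Real.log a - Real.log s) + -(b/s) * (Real.log b - Real.log s)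
        - 2 * Real.log 2 * (a / s))
        = -(a * Real.log a) - (b * Real.log b) + s * Real.log s - 2 * Real.log 2 * a
        - (a + b - s) * Real.log s := by
      field_simp
      ring
    rw [expand] at hmul
    have : a + b - s = 0 := by rw [hs]; ring
    rw [this, zero_mul, sub_zero] at hmul
    linarith

lemma key_logb {a b : ℝ} (ha : 0 ≤ a) (hab : a ≤ b) :
    a * Real.logb 2 a + b * Real.logb 2 b + 2 * a ≤ (a + b) * Real.logb 2 (a + b) := by
  have hl2 : 0 < Real.log 2 := Real.log_pos (by norm_num)
  have h := key_log ha hab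
  have hne : Real.log 2 ≠ 0 := ne_of_gt hl2
  have h2 : (a * Real.log a + b * Real.log b + 2 * Real.log 2 * a) / Real.log 2
      ≤ ((a + b) * Real.log (a + b)) / Real.log 2 := (div_le_div_iff_of_pos_right hl2).2 h
  have e1 : (a * Real.log a + b * Real.log b + 2 * Real.log 2 * a) / Real.log 2
      = a * Real.logb 2 a + b * Real.logb 2 b + 2 * a := by
    rw [Real.logb, Real.logb]; field_simp
  have e2 : ((a + b) * Real.log (a + b)) / Real.log 2 = (a + b) * Real.logb 2 (a + b) := by
    rw [Real.logb]; field_simp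
  rw [e1, e2] at h2
  exact h2

open Finset

lemma hamming_split {n : ℕ} (f g : Fin (n+1) → Bool) :
    hammingDist f g =
      hammingDist (Fin.init f) (Fin.init g) +
        (if f (Fin.last n) = g (Fin.last n) then 0 else 1) := by
  unfold hammingDist
  rw [Finset.card_filter, Finset.card_filter, Fin.sum_univ_castSucc]
  simp only [Fin.init]
  congr 1
  by_cases h : f (Fin.last n) = g (Fin.last n) <;> simp [h]

-- For f,g with equal last coordinate:
lemma hamming_split_eq {n : ℕ} (f g : Fin (n+1) → Bool) (h : f (Fin.last n) = g (Fin.last n)) :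
    hammingDist f g = hammingDist (Fin.init f) (Fin.init g) := by
  rw [hamming_split, if_pos h, add_zero]

lemma hamming_split_ne {n : ℕ} (f g : Fin (n+1) → Bool) (h : f (Fin.last n) ≠ g (Fin.last n)) :
    hammingDist f g = hammingDist (Fin.init f) (Fin.init g) + 1 := by
  rw [hamming_split, if_neg h]

section
variable {n : ℕ} (S : Finset (Fin (n+1) → Bool)) (b : Bool)

/-- The bslice of `S` at last coordinate `b`, as a subset of the smaller cube. -/
noncomputable def bslice : Finset (Fin n → Bool) :=
  Finset.univ.filter (fun g => Fin.snoc g b ∈ S)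

lemma mem_bslice {g : Fin n → Bool} : g ∈ bslice S b ↔ Fin.snoc g b ∈ S := by
  simp [bslice]

lemma init_mem_bslice {f : Fin (n+1) → Bool} (hf : f ∈ S) (hb : f (Fin.last n) = b) :
    Fin.init f ∈ bslice S b := by
  rw [mem_bslice, ← hb, Fin.snoc_init_self]
  exact hf

lemma card_bslice_eq : (bslice S b).card = (S.filter (fun f => f (Fin.last n) = b)).card := by
  refine Finset.card_nbij' (fun g => Fin.snoc g b) Fin.init ?_ ?_ ?_ ?_
  · intro g hg
    rw [Finset.mem_coe, mem_bslice] at hg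
    simp [Finset.mem_filter, hg, Fin.snoc_last]
  · intro f hf
    rw [Finset.mem_coe, Finset.mem_filter] at hf
    exact init_mem_bslice S b hf.1 hf.2
  · intro g hg
    simp
  · intro f hf
    rw [Finset.mem_coe, Finset.mem_filter] at hf
    show Fin.snoc (Fin.init f) b = f
    rw [← hf.2]
    exact Fin.snoc_init_self f
end

section
variable {n : ℕ} (S : Finset (Fin (n+1) → Bool)) (b : Bool)

lemma neighbor_count (f : Fin (n+1) → Bool) (hb : f (Fin.last n) = b) :
    (S.filter (fun f' => hammingDist f f' = 1)).card
      = ((bslice S b).filter (fun g => hammingDist (Fin.init f) g = 1)).card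
        + (if Fin.init f ∈ bslice S (!b) then 1 else 0) := by
  classical
  rw [← Finset.card_filter_add_card_filter_not
    (s := S.filter (fun f' => hammingDist f f' = 1)) (p := fun f' => f' (Fin.last n) = b)]
  congr 1
  · -- same-level part
    refine Finset.card_nbij' Fin.init (fun g => Fin.snoc g b) ?_ ?_ ?_ ?_
    · intro f' hf'
      simp only [Finset.mem_coe, Finset.mem_filter] at hf' ⊢
      refine ⟨init_mem_bslice S b hf'.1.1 hf'.2, ?_⟩
      rw [← hamming_split_eq f f' (by rw [hb, hf'.2])]
      exact hf'.1.2
    · intro g hg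
      simp only [Finset.mem_coe, Finset.mem_filter, mem_bslice] at hg ⊢
      refine ⟨⟨hg.1, ?_⟩, by simp⟩
      rw [hamming_split_eq f (Fin.snoc g b) (by rw [hb]; simp)]
      simpa using hg.2
    · intro f' hf'
      simp only [Finset.mem_coe, Finset.mem_filter] at hf'
      show Fin.snoc (Fin.init f') b = f'
      rw [← hf'.2]
      exact Fin.snoc_init_self f'
    · intro g hg
      simp
  · -- cross part
    have hset : (S.filter (fun f' => hammingDist f f' = 1)).filter
          (fun f' => ¬ f' (Fin.last n) = b)
        = S.filter (fun f' => f' = Fin.snoc (Fin.init f) (!b)) := by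
      ext f'
      simp only [Finset.mem_filter, and_assoc]
      constructor
      · rintro ⟨h1, h2, h3⟩
        refine ⟨h1, ?_⟩
        have hlast : f' (Fin.last n) = !b := by
          cases b <;> simp_all
        have hne : f (Fin.last n) ≠ f' (Fin.last n) := by rw [hb, hlast]; simp
        have := hamming_split_ne f f' hne
        rw [this] at h2
        have h0 : hammingDist (Fin.init f) (Fin.init f') = 0 := by omega
        have hinit : Fin.init f' = Fin.init f := (hammingDist_eq_zero.1 h0).symm
        calc f' = Fin.snoc (Fin.init f') (f' (Fin.last n)) := (Fin.snoc_init_self f').symm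
          _ = Fin.snoc (Fin.init f) (!b) := by rw [hinit, hlast]
      · rintro ⟨h1, h2⟩
        have hlast : f' (Fin.last n) = !b := by rw [h2]; simp
        have hne : f (Fin.last n) ≠ f' (Fin.last n) := by rw [hb, hlast]; cases b <;> simp
        refine ⟨h1, ?_, by rw [hlast]; cases b <;> simp⟩
        rw [hamming_split_ne f f' hne]
        have hinit : Fin.init f' = Fin.init f := by rw [h2]; simp
        rw [hinit, hammingDist_self]
    rw [hset, Finset.filter_eq' S]
    by_cases h : Fin.snoc (Fin.init f) (!b) ∈ S <;> simp [mem_bslice, h]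
end

section
variable {n : ℕ} (S : Finset (Fin (n+1) → Bool))

lemma sum_slice (b : Bool) :
    ∑ f ∈ S.filter (fun f => f (Fin.last n) = b),
        (S.filter (fun f' => hammingDist f f' = 1)).card
      = (∑ g ∈ bslice S b, ((bslice S b).filter (fun g' => hammingDist g g' = 1)).card)
        + (bslice S b ∩ bslice S (!b)).card := by
  classical
  have step1 : ∑ f ∈ S.filter (fun f => f (Fin.last n) = b),
        (S.filter (fun f' => hammingDist f f' = 1)).card
      = ∑ f ∈ S.filter (fun f => f (Fin.last n) = b),
        (((bslice S b).filter (fun g => hammingDist (Fin.init f) g = 1)).card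
          + (if Fin.init f ∈ bslice S (!b) then 1 else 0)) := by
    refine Finset.sum_congr rfl ?_
    intro f hf
    rw [Finset.mem_filter] at hf
    exact neighbor_count S b f hf.2
  rw [step1]
  have step2 : ∑ f ∈ S.filter (fun f => f (Fin.last n) = b),
        (((bslice S b).filter (fun g => hammingDist (Fin.init f) g = 1)).card
          + (if Fin.init f ∈ bslice S (!b) then 1 else 0))
      = ∑ g ∈ bslice S b,
        (((bslice S b).filter (fun g' => hammingDist g g' = 1)).card
          + (if g ∈ bslice S (!b) then 1 else 0)) := by
    refine Finset.sum_nbij' Fin.init (fun g => Fin.snoc g b) ?_ ?_ ?_ ?_ ?_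
    · intro f hf
      rw [Finset.mem_filter] at hf
      exact init_mem_bslice S b hf.1 hf.2
    · intro g hg
      rw [mem_bslice] at hg
      simp [Finset.mem_filter, hg]
    · intro f hf
      rw [Finset.mem_filter] at hf
      show Fin.snoc (Fin.init f) b = f
      rw [← hf.2]
      exact Fin.snoc_init_self f
    · intro g hg
      simp
    · intro f hf
      rfl
  rw [step2, Finset.sum_add_distrib]
  congr 1
  rw [← Finset.filter_mem_eq_inter, Finset.card_filter]
end

section
variable {n : ℕ} (S : Finset (Fin (n+1) → Bool))

lemma filter_not_false :
    S.filter (fun f => ¬ f (Fin.last n) = false) = S.filter (fun f => f (Fin.last n) = true) := by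
  refine Finset.filter_congr ?_
  intro f _
  simp

lemma sum_identity :
    ∑ f ∈ S, (S.filter (fun f' => hammingDist f f' = 1)).card
      = (∑ g ∈ bslice S false,
            ((bslice S false).filter (fun g' => hammingDist g g' = 1)).card)
        + (∑ g ∈ bslice S true,
            ((bslice S true).filter (fun g' => hammingDist g g' = 1)).card)
        + 2 * (bslice S false ∩ bslice S true).card := by
  classical
  rw [← Finset.sum_filter_add_sum_filter_not S (fun f => f (Fin.last n) = false)]
  rw [filter_not_false, sum_slice S false, sum_slice S true]
  have h1 : bslice S (!false) = bslice S true := rfl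
  have h2 : bslice S (!true) = bslice S false := rfl
  rw [h1, h2, Finset.inter_comm (bslice S true) (bslice S false)]
  ring

lemma card_split : S.card = (bslice S false).card + (bslice S true).card := by
  classical
  rw [card_bslice_eq, card_bslice_eq,
    ← Finset.card_filter_add_card_filter_not (s := S) (p := fun f => f (Fin.last n) = false),
    filter_not_false]
end

lemma rhs_nonneg (c : ℕ) : 0 ≤ (c : ℝ) * Real.logb 2 (c : ℝ) := by
  rcases Nat.eq_zero_or_pos c with h | h
  · simp [h]
  · have h1 : (1:ℝ) ≤ (c:ℝ) := by exact_mod_cast h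
    exact mul_nonneg (by positivity) (Real.logb_nonneg (by norm_num) h1)

lemma harper : ∀ (n : ℕ) (S : Finset (Fin n → Bool)),
    (∑ α ∈ S, ((S.filter (fun α' => hammingDist α α' = 1)).card : ℝ)) ≤
      (S.card : ℝ) * Real.logb 2 (S.card : ℝ) := by
  intro n
  induction n with
  | zero =>
    intro S
    have hd : ∀ α α' : Fin 0 → Bool, hammingDist α α' ≠ 1 := by
      intro α α'
      have : α = α' := by funext i; exact absurd i.2 (by omega)
      rw [this, hammingDist_self]
      omega
    have : ∀ α ∈ S, ((S.filter (fun α' => hammingDist α α' = 1)).card : ℝ) = 0 := by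
      intro α _
      rw [Finset.filter_false_of_mem (fun α' _ => hd α α')]
      simp
    rw [Finset.sum_congr rfl this, Finset.sum_const_zero]
    exact rhs_nonneg _
  | succ n ih =>
    intro S
    classical
    set S0 := bslice S false with hS0
    set S1 := bslice S true with hS1
    have hid := sum_identity S
    have hcard := card_split S
    have hA0 := ih S0
    have hA1 := ih S1
    have hmR : ((S0 ∩ S1).card : ℝ) ≤ min (S0.card : ℝ) (S1.card : ℝ) := by
      refine le_min ?_ ?_
      · exact_mod_cast Finset.card_le_card (Finset.inter_subset_left)
      · exact_mod_cast Finset.card_le_card (Finset.inter_subset_right)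
    -- cast the identity to ℝ
    have hidR : (∑ α ∈ S, ((S.filter (fun α' => hammingDist α α' = 1)).card : ℝ))
        = (∑ g ∈ S0, (((S0.filter (fun g' => hammingDist g g' = 1)).card : ℝ)))
          + (∑ g ∈ S1, (((S1.filter (fun g' => hammingDist g g' = 1)).card : ℝ)))
          + 2 * ((S0 ∩ S1).card : ℝ) := by
      push_cast [← Nat.cast_sum]
      exact_mod_cast congrArg (Nat.cast : ℕ → ℝ) hid
    rw [hidR]
    have hcardR : (S.card : ℝ) = (S0.card : ℝ) + (S1.card : ℝ) := by exact_mod_cast hcard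
    rw [hcardR]
    rcases le_total (S0.card : ℝ) (S1.card : ℝ) with h | h
    · have hk := key_logb (a := (S0.card : ℝ)) (b := (S1.card : ℝ)) (by positivity) h
      have : ((S0 ∩ S1).card : ℝ) ≤ (S0.card : ℝ) := le_trans hmR (min_le_left _ _)
      linarith
    · have hk := key_logb (a := (S1.card : ℝ)) (b := (S0.card : ℝ)) (by positivity) h
      have : ((S0 ∩ S1).card : ℝ) ≤ (S1.card : ℝ) := le_trans hmR (min_le_right _ _)
      rw [add_comm ((S1.card:ℝ)) ((S0.card:ℝ))] at hk
      linarith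

theorem stmt_7 (n : ℕ) (S : Finset (Fin n → Bool)) (hS : S.Nonempty) :
    (∑ α ∈ S, ((S.filter (fun α' => hammingDist α α' = 1)).card : ℝ)) ≤
      (S.card : ℝ) * Real.logb 2 (S.card : ℝ) := by
  exact harper n S
end

section
/- Let S ⊆ {0,1}ⁿ be the set of satisfying assignments of a CNF formula φ, and let α ∈ S. If flipping the i-th bit of α yields an assignment not in S, then φ contains a clause that is critical for variable xᵢ under α, i.e., a clause in which exactly one literal is satisfied by α and that literal involves variable xᵢ. -/
open Classical in
/-- A clause is critical for variable `i` under assignment `α` if exactly one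
of its literals is satisfied by `α`, and that literal's variable is `i`. -/
def IsCriticalClause {n : ℕ} (C : Finset (Fin n × Bool)) (α : Fin n → Bool)
    (i : Fin n) : Prop :=
  (C.filter (fun l => α l.1 = l.2)).card = 1 ∧
    ∀ l ∈ C, α l.1 = l.2 → l.1 = i

/-- `α` satisfies a CNF formula (a finite set of clauses) if every clause
contains a literal satisfied by `α`. -/
def SatisfiesCNF {n : ℕ} (α : Fin n → Bool)
    (φ : Finset (Finset (Fin n × Bool))) : Prop :=
  ∀ C ∈ φ, ∃ l ∈ C, α l.1 = l.2

theorem stmt_10 {n : ℕ} (φ : Finset (Finset (Fin n × Bool)))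
    (α : Fin n → Bool) (i : Fin n)
    (hα : SatisfiesCNF α φ)
    (hflip : ¬ SatisfiesCNF (Function.update α i (! α i)) φ) :
    ∃ C ∈ φ, IsCriticalClause C α i := by
  classical
  simp only [SatisfiesCNF, not_forall, not_exists] at hflip
  obtain ⟨C, hCφ, hC⟩ := hflip
  refine ⟨C, hCφ, ?_, ?_⟩
  · -- all satisfied literals have variable i
    have hvar : ∀ l ∈ C, α l.1 = l.2 → l.1 = i := by
      intro l hl hsat
      by_contra hne
      exact hC l ⟨hl, by rw [Function.update_of_ne hne]; exact hsat⟩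
    obtain ⟨l₀, hl₀, hsat₀⟩ := hα C hCφ
    have hl₀i : l₀ = (i, α i) := by
      have := hvar l₀ hl₀ hsat₀
      cases l₀; simp_all
    rw [Finset.card_eq_one]
    refine ⟨(i, α i), ?_⟩
    ext l
    simp only [Finset.mem_filter, Finset.mem_singleton]
    constructor
    · rintro ⟨hl, hsat⟩
      have := hvar l hl hsat
      cases l; simp_all
    · rintro rfl
      exact ⟨hl₀i ▸ hl₀, rfl⟩
  · intro l hl hsat
    by_contra hne
    exact hC l ⟨hl, by rw [Function.update_of_ne hne]; exact hsat⟩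
end
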